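/- Fréchet–Hoeffding bounds for the conjunction of two conditional events: let μ be a probability measure on a measurable space Ω and A, H, B, K measurable sets with μ(H) > 0 and μ(K) > 0. Set x = P(A|H), y = P(B|K), and z = (μ(A∩H∩B∩K) + x·μ(Hᶜ∩B∩K) + y·μ(A∩H∩Kᶜ)) / μ(H∪K). Then max(x + y − 1, 0) ≤ z ≤ min(x, y). -/

import Mathlib

open MeasureTheory

/-- Conditional probability `P(E|H) = μ(E ∩ H) / μ(H)` as a real number. -/
noncomputable def condP {Ω : Type*} [MeasurableSpace Ω] (μ : Measure Ω) (E H : Set Ω) : ℝ :=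
  (μ (E ∩ H)).toReal / (μ H).toReal

set_option maxHeartbeats 1000000 in
/-- Fréchet–Hoeffding bounds for the prevision `z` of the conjunction
`(A|H) ∧ (B|K)`: `max(x + y − 1, 0) ≤ z ≤ min(x, y)`, where `x = P(A|H)`,
`y = P(B|K)` and `z = (μ(A∩H∩B∩K) + x·μ(Hᶜ∩B∩K) + y·μ(A∩H∩Kᶜ)) / μ(H∪K)`. -/
theorem frechet_hoeffding_bounds_conjunction
    {Ω : Type*} [MeasurableSpace Ω] (μ : Measure Ω) [IsProbabilityMeasure μ]
    (A H B K : Set Ω) (hA : MeasurableSet A) (hH : MeasurableSet H)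
    (hB : MeasurableSet B) (hK : MeasurableSet K)
    (hHpos : 0 < μ H) (hKpos : 0 < μ K)
    (x y z : ℝ) (hx : x = condP μ A H) (hy : y = condP μ B K)
    (hz : z = ((μ (A ∩ H ∩ B ∩ K)).toReal + x * (μ (Hᶜ ∩ B ∩ K)).toReal
        + y * (μ (A ∩ H ∩ Kᶜ)).toReal) / (μ (H ∪ K)).toReal) :
    max (x + y - 1) 0 ≤ z ∧ z ≤ min x y := by
  have fin : ∀ s : Set Ω, μ s ≠ ⊤ := fun s => measure_ne_top μ s
  have mono : ∀ s t : Set Ω, s ⊆ t → (μ s).toReal ≤ (μ t).toReal :=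
    fun s t h => ENNReal.toReal_mono (fin t) (measure_mono h)
  have nn : ∀ s : Set Ω, 0 ≤ (μ s).toReal := fun s => ENNReal.toReal_nonneg
  have split : ∀ s t : Set Ω, MeasurableSet t →
      (μ s).toReal = (μ (s ∩ t)).toReal + (μ (s ∩ tᶜ)).toReal := by
    intro s t ht
    rw [← ENNReal.toReal_add (fin _) (fin _)]
    congr 1
    rw [← measure_inter_add_diff s ht, Set.diff_eq]
  -- abbreviations
  set p := (μ (A ∩ H ∩ B ∩ K)).toReal with hp
  set q := (μ (Hᶜ ∩ B ∩ K)).toReal with hq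
  set r := (μ (A ∩ H ∩ Kᶜ)).toReal with hr
  set mH := (μ H).toReal with hmH
  set mK := (μ K).toReal with hmK
  set D := (μ (H ∪ K)).toReal with hD
  set mAH := (μ (A ∩ H)).toReal with hmAH
  set mBK := (μ (B ∩ K)).toReal with hmBK
  set mAHK := (μ (A ∩ H ∩ K)).toReal with hmAHK
  set mBKH := (μ (B ∩ K ∩ H)).toReal with hmBKH
  set mHK := (μ (H ∩ K)).toReal with hmHK
  set mHcK := (μ (Hᶜ ∩ K)).toReal with hmHcK
  set mHKc := (μ (H ∩ Kᶜ)).toReal with hmHKc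
  -- positivity of denominators
  have hmHpos : 0 < mH := ENNReal.toReal_pos hHpos.ne' (fin H)
  have hmKpos : 0 < mK := ENNReal.toReal_pos hKpos.ne' (fin K)
  have hDpos : 0 < D := by
    have : 0 < μ (H ∪ K) := lt_of_lt_of_le hHpos (measure_mono Set.subset_union_left)
    exact ENNReal.toReal_pos this.ne' (fin _)
  -- x, y, z basic equations
  have hxmul : x * mH = mAH := by rw [hx, condP]; exact div_mul_cancel₀ _ hmHpos.ne'
  have hymul : y * mK = mBK := by rw [hy, condP]; exact div_mul_cancel₀ _ hmKpos.ne'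
  have hzmul : z * D = p + x * q + y * r := by rw [hz]; field_simp
  have hx0 : 0 ≤ x := by rw [hx, condP]; positivity
  have hy0 : 0 ≤ y := by rw [hy, condP]; positivity
  have hx1 : x ≤ 1 := by
    rw [hx, condP]; rw [div_le_one hmHpos]; exact mono _ _ Set.inter_subset_right
  have hy1 : y ≤ 1 := by
    rw [hy, condP]; rw [div_le_one hmKpos]; exact mono _ _ Set.inter_subset_right
  -- additivity facts
  have eAH : mAH = mAHK + r := split (A ∩ H) K hK
  have eBK : mBK = mBKH + q := by
    have h := split (B ∩ K) H hH
    have e1 : (B ∩ K) ∩ Hᶜ = Hᶜ ∩ B ∩ K := by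
      ext w; simp only [Set.mem_inter_iff, Set.mem_compl_iff]; tauto
    rw [e1] at h; exact h
  have eH : mH = mHK + mHKc := split H K hK
  have eHcK : mHcK = q + (μ (Hᶜ ∩ K ∩ Bᶜ)).toReal := by
    have h := split (Hᶜ ∩ K) B hB
    have e1 : (Hᶜ ∩ K) ∩ B = Hᶜ ∩ B ∩ K := by
      ext w; simp only [Set.mem_inter_iff, Set.mem_compl_iff]; tauto
    rw [e1] at h; exact h
  have eHKc : mHKc = r + (μ (H ∩ Kᶜ ∩ Aᶜ)).toReal := by
    have h := split (H ∩ Kᶜ) A hA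
    have e1 : (H ∩ Kᶜ) ∩ A = A ∩ H ∩ Kᶜ := by
      ext w; simp only [Set.mem_inter_iff, Set.mem_compl_iff]; tauto
    rw [e1] at h; exact h
  have eD1 : D = mH + mHcK := by
    have h := split (H ∪ K) H hH
    have e1 : (H ∪ K) ∩ H = H := by
      ext w; simp only [Set.mem_inter_iff, Set.mem_union]; tauto
    have e2 : (H ∪ K) ∩ Hᶜ = Hᶜ ∩ K := by
      ext w; simp only [Set.mem_inter_iff, Set.mem_union, Set.mem_compl_iff]; tauto
    rw [e1, e2] at h; exact h
  have eD2 : D = mK + mHKc := by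
    have h := split (H ∪ K) K hK
    have e1 : (H ∪ K) ∩ K = K := by
      ext w; simp only [Set.mem_inter_iff, Set.mem_union]; tauto
    have e2 : (H ∪ K) ∩ Kᶜ = H ∩ Kᶜ := by
      ext w; simp only [Set.mem_inter_iff, Set.mem_union, Set.mem_compl_iff]; tauto
    rw [e1, e2] at h; exact h
  -- inclusion-exclusion on H ∩ K
  have IE : mAHK + mBKH ≤ mHK + p := by
    have h1 : μ (A ∩ H ∩ K) + μ (B ∩ K ∩ H)
        = μ ((A ∩ H ∩ K) ∪ (B ∩ K ∩ H)) + μ ((A ∩ H ∩ K) ∩ (B ∩ K ∩ H)) := by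
      rw [measure_union_add_inter _ ((hB.inter hK).inter hH)]
    have h2 : μ ((A ∩ H ∩ K) ∪ (B ∩ K ∩ H)) ≤ μ (H ∩ K) := by
      apply measure_mono
      intro w hw; rcases hw with hw | hw <;> (simp at hw ⊢; tauto)
    have h3 : (A ∩ H ∩ K) ∩ (B ∩ K ∩ H) = A ∩ H ∩ B ∩ K := by
      ext w; constructor <;> (intro hw; simp at hw ⊢; tauto)
    have h4 : μ (A ∩ H ∩ K) + μ (B ∩ K ∩ H) ≤ μ (H ∩ K) + μ (A ∩ H ∩ B ∩ K) := by
      rw [h1, h3]; exact add_le_add h2 le_rfl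
    have h5 := ENNReal.toReal_mono (by
      exact ENNReal.add_ne_top.mpr ⟨fin _, fin _⟩) h4
    rw [ENNReal.toReal_add (fin _) (fin _), ENNReal.toReal_add (fin _) (fin _)] at h5
    exact h5
  -- simple subset bounds
  have hpAHK : p ≤ mAHK := mono _ _ (by intro w hw; simp at hw ⊢; tauto)
  have hpBKH : p ≤ mBKH := mono _ _ (by intro w hw; simp at hw ⊢; tauto)
  have hqHcK : q ≤ mHcK := by linarith [eHcK, nn (Hᶜ ∩ K ∩ Bᶜ)]
  have hrHKc : r ≤ mHKc := by linarith [eHKc, nn (H ∩ Kᶜ ∩ Aᶜ)]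
  have hp0 : 0 ≤ p := nn _
  have hq0 : 0 ≤ q := nn _
  have hr0 : 0 ≤ r := nn _
  -- auxiliary linearized product facts
  have t1 : x * D = mAHK + r + x * mHcK := by
    rw [eD1, mul_add, hxmul, eAH]
  have t2 : y * D = mBKH + q + y * mHKc := by
    rw [eD2, mul_add, hymul, eBK]
  have hDsum : D = mHK + mHKc + mHcK := by rw [eD1, eH]
  have h1 : x * mHcK + q ≤ mHcK + x * q := by
    nlinarith [mul_nonneg (sub_nonneg.2 hx1) (sub_nonneg.2 hqHcK)]
  have h2 : y * mHKc + r ≤ mHKc + y * r := by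
    nlinarith [mul_nonneg (sub_nonneg.2 hy1) (sub_nonneg.2 hrHKc)]
  have h3 : x * q ≤ x * mHcK := mul_le_mul_of_nonneg_left hqHcK hx0
  have h4 : y * r ≤ y * mHKc := mul_le_mul_of_nonneg_left hrHKc hy0
  have h5 : y * r ≤ r := mul_le_of_le_one_left hr0 hy1
  have h6 : x * q ≤ q := mul_le_of_le_one_left hq0 hx1
  constructor
  · rw [max_le_iff]
    refine ⟨?_, ?_⟩
    · -- x + y - 1 ≤ z
      have key : (x + y - 1) * D ≤ z * D := by
        have e : (x + y - 1) * D = x * D + y * D - D := by ring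
        rw [e, hzmul, t1, t2]
        linarith [hDsum, IE]
      exact le_of_mul_le_mul_right key hDpos
    · -- 0 ≤ z
      have key : 0 * D ≤ z * D := by rw [hzmul, zero_mul]; positivity
      exact le_of_mul_le_mul_right key hDpos
  · rw [le_min_iff]
    refine ⟨?_, ?_⟩
    · -- z ≤ x
      have key : z * D ≤ x * D := by
        rw [hzmul, t1]
        linarith [hpAHK]
      exact le_of_mul_le_mul_right key hDpos
    · -- z ≤ y
      have key : z * D ≤ y * D := by
        rw [hzmul, t2]
        linarith [hpBKH]
      exact le_of_mul_le_mul_right key hDpos
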